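/- For m ≥ 2 and q = 2^m, the number of solutions of x² = 1 in PSL(2,q) equals q² = 2^{2m}; consequently b_2(PSL(2,2^m)) = 2^{2m−1}. -/

import Mathlib

open scoped MatrixGroups
open Matrix

section aux
variable {F : Type*} [Field F] [CharP F 2]

lemma my_sq_eq_sq_iff {a b : F} : a ^ 2 = b ^ 2 ↔ a = b := by
  constructor
  · intro h
    have h2 : (2 : F) = 0 := by exact_mod_cast CharP.cast_eq_zero F 2
    have h0 : (a - b) ^ 2 = 0 := by linear_combination h + (b ^ 2 - a * b) * h2
    have := pow_eq_zero_iff (n := 2) (by norm_num) |>.mp h0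
    exact sub_eq_zero.mp this
  · rintro rfl; rfl

lemma my_center_eq_bot :
    Subgroup.center (SpecialLinearGroup (Fin 2) F) = ⊥ := by
  rw [eq_bot_iff]
  intro A hA
  obtain ⟨r, hr, hr'⟩ := Matrix.SpecialLinearGroup.mem_center_iff.mp hA
  have hr1 : r = 1 := by
    rw [Fintype.card_fin] at hr
    exact my_sq_eq_sq_iff.mp (by simpa using hr)
  subst hr1
  simp only [Subgroup.mem_bot]
  ext i j
  rw [← hr']
  simp [Matrix.scalar_apply, SpecialLinearGroup.coe_one, Matrix.one_apply]

lemma my_sq_one_iff (A : SpecialLinearGroup (Fin 2) F) :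
    A ^ 2 = 1 ↔ (A : Matrix (Fin 2) (Fin 2) F) 1 1 = (A : Matrix (Fin 2) (Fin 2) F) 0 0 ∧
      ((A : Matrix (Fin 2) (Fin 2) F) 0 0) ^ 2
        + (A : Matrix (Fin 2) (Fin 2) F) 0 1 * (A : Matrix (Fin 2) (Fin 2) F) 1 0 = 1 := by
  have h2 : (2 : F) = 0 := by exact_mod_cast CharP.cast_eq_zero F 2
  constructor
  · intro h
    have hmat : (A : Matrix (Fin 2) (Fin 2) F) * A = 1 := by
      have := congrArg (Subtype.val) h
      simpa [pow_two] using this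
    have e00 : (A : Matrix (Fin 2) (Fin 2) F) 0 0 * (A : Matrix (Fin 2) (Fin 2) F) 0 0
        + (A : Matrix (Fin 2) (Fin 2) F) 0 1 * (A : Matrix (Fin 2) (Fin 2) F) 1 0 = 1 := by
      have := congrFun (congrFun hmat 0) 0
      simpa [Matrix.mul_apply, Fin.sum_univ_two, Matrix.one_apply] using this
    have e11 : (A : Matrix (Fin 2) (Fin 2) F) 1 0 * (A : Matrix (Fin 2) (Fin 2) F) 0 1
        + (A : Matrix (Fin 2) (Fin 2) F) 1 1 * (A : Matrix (Fin 2) (Fin 2) F) 1 1 = 1 := by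
      have := congrFun (congrFun hmat 1) 1
      simpa [Matrix.mul_apply, Fin.sum_univ_two, Matrix.one_apply] using this
    have had : (A : Matrix (Fin 2) (Fin 2) F) 1 1 = (A : Matrix (Fin 2) (Fin 2) F) 0 0 :=
      my_sq_eq_sq_iff.mp (by linear_combination e11 - e00)
    exact ⟨had, by linear_combination e00⟩
  · rintro ⟨had, hsum⟩
    have hmat : (A : Matrix (Fin 2) (Fin 2) F) * A = 1 := by
      rw [Matrix.eta_fin_two (A : Matrix (Fin 2) (Fin 2) F), had, Matrix.mul_fin_two]
      ext i j
      fin_cases i <;> fin_cases j <;> simp [Matrix.one_apply]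
      · linear_combination hsum
      · linear_combination ((A : Matrix (Fin 2) (Fin 2) F) 0 0
          * (A : Matrix (Fin 2) (Fin 2) F) 0 1) * h2
      · linear_combination ((A : Matrix (Fin 2) (Fin 2) F) 0 0
          * (A : Matrix (Fin 2) (Fin 2) F) 1 0) * h2
      · linear_combination hsum
    ext i j
    have := congrFun (congrFun hmat i) j
    simpa [pow_two] using this

end aux

section count
variable (F : Type*) [Field F] [CharP F 2]

/-- Involutions in SL(2,F) correspond to triples (a,b,c) with a² + bc = 1. -/
noncomputable def my_equiv_triple :
    {A : SpecialLinearGroup (Fin 2) F // A ^ 2 = 1} ≃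
      {v : F × F × F // v.1 ^ 2 + v.2.1 * v.2.2 = 1} where
  toFun A := ⟨((A.1 : Matrix (Fin 2) (Fin 2) F) 0 0, (A.1 : Matrix (Fin 2) (Fin 2) F) 0 1,
      (A.1 : Matrix (Fin 2) (Fin 2) F) 1 0), ((my_sq_one_iff A.1).mp A.2).2⟩
  invFun v := ⟨⟨!![v.1.1, v.1.2.1; v.1.2.2, v.1.1], by
      have h2 : (2 : F) = 0 := by exact_mod_cast CharP.cast_eq_zero F 2
      rw [Matrix.det_fin_two_of]
      linear_combination v.2 - (v.1.2.1 * v.1.2.2) * h2⟩, by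
      refine (my_sq_one_iff _).mpr ?_
      constructor <;> simp [v.2]⟩
  left_inv A := by
    ext i j
    have had := ((my_sq_one_iff A.1).mp A.2).1
    fin_cases i <;> fin_cases j <;> simp [had]
  right_inv v := by
    obtain ⟨⟨a, b, c⟩, hv⟩ := v
    rfl

open scoped Classical in
/-- Triples (a,b,c) with a² + bc = 1 correspond to pairs. -/
noncomputable def my_equiv_pair :
    {v : F × F × F // v.1 ^ 2 + v.2.1 * v.2.2 = 1} ≃ F × F where
  toFun v := if v.1.2.1 = 0 then (v.1.2.2, 0) else (v.1.1, v.1.2.1)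
  invFun p := if h : p.2 = 0 then ⟨(1, 0, p.1), by simp⟩
    else ⟨(p.1, p.2, (1 + p.1 ^ 2) / p.2), by
      have h2 : (2 : F) = 0 := by exact_mod_cast CharP.cast_eq_zero F 2
      field_simp
      linear_combination (p.1 ^ 2) * h2⟩
  left_inv v := by
    obtain ⟨⟨a, b, c⟩, hv⟩ := v
    have h2 : (2 : F) = 0 := by exact_mod_cast CharP.cast_eq_zero F 2
    by_cases hb : b = 0
    · subst hb
      have ha : a = 1 := by
        have : a ^ 2 = 1 ^ 2 := by linear_combination hv
        exact my_sq_eq_sq_iff.mp this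
      simp [ha]
    · have hc : (1 + a ^ 2) / b = c := by
        field_simp
        linear_combination -hv + (a ^ 2) * h2
      simp [hb, hc]
  right_inv p := by
    obtain ⟨x, y⟩ := p
    by_cases hy : y = 0
    · subst hy; simp
    · simp [hy]

lemma my_card_sl [Fintype F] :
    Nat.card {A : SpecialLinearGroup (Fin 2) F // A ^ 2 = 1} = Fintype.card F ^ 2 := by
  rw [Nat.card_congr ((my_equiv_triple F).trans (my_equiv_pair F))]
  simp [Nat.card_eq_fintype_card, sq]

end count

lemma my_card_transfer {G H : Type*} [Group G] [Group H] (e : G ≃* H) :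
    Nat.card {x : G // x ^ 2 = 1} = Nat.card {x : H // x ^ 2 = 1} :=
  Nat.card_congr (e.toEquiv.subtypeEquiv fun x => by
    show x ^ 2 = 1 ↔ e x ^ 2 = 1
    constructor
    · intro h; rw [← map_pow, h, _root_.map_one]
    · intro h; apply e.injective; rw [map_pow, h, _root_.map_one])

/-- For `q = 2^m`, `m ≥ 2`, the number of solutions of `x² = 1` in `PSL(2,q)`
equals `q² = 2^{2m}`; consequently `b₂(PSL(2,2^m)) = 2^{2m−1}`. -/
theorem card_involutions_PSL_two_char_two (m : ℕ) (hm : 2 ≤ m)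
    (F : Type*) [Field F] [Fintype F] (hF : Fintype.card F = 2 ^ m) :
    Nat.card {x : PSL(2, F) // x ^ 2 = 1} = 2 ^ (2 * m) ∧
      Nat.card {x : PSL(2, F) // x ^ 2 = 1} / 2 = 2 ^ (2 * m - 1) := by
  have hp : (ringChar F).Prime := CharP.char_is_prime F _
  obtain ⟨n, hn, hcard⟩ := FiniteField.card F (ringChar F)
  have hpe : ringChar F = 2 := by
    have hdvd : ringChar F ∣ 2 ^ m := by
      rw [← hF, hcard]
      exact dvd_pow_self _ n.pos.ne'
    have := (Nat.prime_two.eq_one_or_self_of_dvd _ (hp.dvd_of_dvd_pow hdvd))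
    rcases this with h | h
    · exact absurd h hp.ne_one
    · exact h
  haveI : CharP F 2 := hpe ▸ ringChar.charP F
  have e : PSL(2, F) ≃* SpecialLinearGroup (Fin 2) F :=
    (QuotientGroup.quotientMulEquivOfEq (my_center_eq_bot (F := F))).trans
      QuotientGroup.quotientBot
  have hmain : Nat.card {x : PSL(2, F) // x ^ 2 = 1} = 2 ^ (2 * m) := by
    rw [my_card_transfer e, my_card_sl, hF, ← pow_mul, mul_comm]
  refine ⟨hmain, ?_⟩
  rw [hmain, show 2 * m = (2 * m - 1) + 1 by omega, pow_succ]
  simp
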